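/- arXiv:2211.13456 — 2 statements merged into one kernel-verified Lean document; each statement's English description precedes it below -/
import Mathlib

section
/- Let α ∈ (0,1), let W ⊆ V⊗ℝ^ℓ be a linear subspace, and let φ: W → V be linear. Suppose there exist a finite function G: Ω_B → ℝ and a constant C₀ such that G satisfies the main inequality, the boundary inequality, and G(x,0,z,t,s) ≤ C₀·z·s for all (x,0,z,t,s) ∈ Ω_B. Then the bilinear trace inequality holds: there is a constant C (depending only on C₀) such that ∫_𝕋 |𝕀_α[F]| dν ≤ C·(sup_{n≥0, ω∈𝒜ℱ_n} m^{(1−α)n} ν(ω))·‖F‖_{L¹} for every finite nonnegative Borel measure ν on 𝕋 and every simple martingale F ∈ 𝕎. -/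
open MeasureTheory Finset

noncomputable section

namespace TracePaper

variable {ι : Type} [Fintype ι]
variable {E : Type} [AddCommGroup E] [Module ℝ E]

/-- A martingale adapted to the `ι`-uniform filtration, recorded by its values on atoms:
`val n c` is the value of `F_n` on the atom determined by the digit string `c`. -/
structure Mart (ι : Type) [Fintype ι] (E : Type) [AddCommGroup E] [Module ℝ E] where
  val : (n : ℕ) → (Fin n → ι) → E
  avg_eq : ∀ (n : ℕ) (c : Fin n → ι),
    val n c = (Fintype.card ι : ℝ)⁻¹ • ∑ j : ι, val (n + 1) (Fin.snoc c j)

/-- The martingale difference `dF_{n+1}|_ω` on the atom `ω = c ∈ 𝒜ℱ_n`, as an element of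
`V ⊗ E` (an `ι`-tuple with zero average). -/
def diff (F : Mart ι E) (n : ℕ) (c : Fin n → ι) : ι → E :=
  fun j => F.val (n + 1) (Fin.snoc c j) - F.val n c

/-- `F ∈ 𝕎`: all martingale differences lie in `W`. -/
def MemSpace (W : Set (ι → E)) (F : Mart ι E) : Prop :=
  ∀ (n : ℕ) (c : Fin n → ι), diff F n c ∈ W

/-- A simple martingale: all but finitely many differences vanish. -/
def Simple (F : Mart ι E) : Prop :=
  ∃ N : ℕ, ∀ n, N ≤ n → ∀ c : Fin n → ι, diff F n c = 0

/-- Average of an `ι`-tuple. -/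
def avg (X : ι → E) : E := (Fintype.card ι : ℝ)⁻¹ • ∑ j, X j

/-- The set `𝕄^W` of admissible `0`-flat increments. -/
def MW (W : Set (ι → E)) : Set (ι → ℝ) :=
  {v | (∑ j, v j = 0) ∧ (∀ j, -1 ≤ v j) ∧ ∃ a : E, a ≠ 0 ∧ (fun j => v j • a) ∈ W}

/-- `κ_v(θ) = θ log((1/m) ∑_j |1+v_j|^{1/θ})`, extended by continuity at `θ = 0`. -/
def kappaV (ι : Type) [Fintype ι] (v : ι → ℝ) (θ : ℝ) : ℝ :=
  if θ = 0 then Real.log (⨆ j, |1 + v j|)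
  else θ * Real.log ((Fintype.card ι : ℝ)⁻¹ * ∑ j, |1 + v j| ^ (1 / θ))

/-- `κ(θ) = sup {κ_v(θ) : v ∈ 𝕄^W}`. -/
def kappa (W : Set (ι → E)) (θ : ℝ) : ℝ :=
  sSup {r | ∃ v ∈ MW W, r = kappaV ι v θ}

/-- `κ'(1) = inf { -(1/m) ∑_j (1+v_j) log(1+v_j) : v ∈ 𝕄^W }`. -/
def kprime1 (W : Set (ι → E)) : ℝ :=
  sInf {r | ∃ v ∈ MW W,
    r = -((Fintype.card ι : ℝ)⁻¹ * ∑ j, (1 + v j) * Real.log (1 + v j))}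

/-- `W` is geometric (κ affine) with `α = -κ'(1)/log m`; equivalently
`κ(θ) = α (log m)(1-θ)` on `[0,1]`. -/
def GeometricOfOrder (W : Set (ι → E)) (α : ℝ) : Prop :=
  ∀ θ ∈ Set.Icc (0 : ℝ) 1, kappa W θ = α * Real.log (Fintype.card ι) * (1 - θ)

/-- `w = v ⊗ a` is an extremal vector with support `H`. -/
def IsExtremal (W : Set (ι → E)) (α : ℝ) (w : ι → E) (H : Finset ι) : Prop :=
  w ∈ W ∧ ∃ a : E, a ≠ 0 ∧ (H.card : ℝ) = (Fintype.card ι : ℝ) ^ ((1 : ℝ) - α) ∧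
    (∀ j ∈ H, w j = ((Fintype.card ι : ℝ) ^ α - 1) • a) ∧ ∀ j ∉ H, w j = -a

/-- `φ` is a canceling operator. -/
def Canceling (W : Set (ι → E)) (α : ℝ) (φ : (ι → E) → ι → ℝ) : Prop :=
  ∀ (w : ι → E) (H : Finset ι), IsExtremal W α w H → ∀ j ∈ H, φ w j = 0

/-- `W` is a non-local space (of order `α`). -/
def NonLocal (W : Set (ι → E)) (α : ℝ) : Prop :=
  ∀ (w : ι → E) (H : Finset ι), IsExtremal W α w H →
    ∀ u ∈ W, ∀ b : E, (∀ j ∉ H, b + u j = 0) → ∃ c : ℝ, u = c • w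

/-- The martingale transform `𝕀_α[F]`, as a function of the path `γ ∈ 𝕋`. -/
def Ialpha (φ : (ι → E) → ι → ℝ) (α : ℝ) (F : Mart ι E) (γ : ℕ → ι) : ℝ :=
  ∑' n : ℕ, (Fintype.card ι : ℝ) ^ (-(α * n)) *
    φ (diff F n (fun i : Fin n => γ i)) (γ n)

/-- The cylinder (atom of `ℱ_n`) determined by the digit string `c`. -/
def cyl (n : ℕ) (c : Fin n → ι) : Set (ℕ → ι) := {γ | ∀ i : Fin n, γ i = c i}

/-- The Borel σ-algebra of `𝕋` (= the product σ-algebra). -/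
def treeMS (ι : Type) : MeasurableSpace (ℕ → ι) :=
  @MeasurableSpace.pi ℕ (fun _ => ι) (fun _ => ⊤)

section Normed
variable {E' : Type} [NormedAddCommGroup E'] [NormedSpace ℝ E']

/-- `‖F‖_{L¹} = sup_n 𝔼 |F_n|`. -/
def L1Norm (F : Mart ι E') : ℝ :=
  ⨆ n : ℕ, ((Fintype.card ι : ℝ) ^ n)⁻¹ * ∑ c : Fin n → ι, ‖F.val n c‖

/-- The bilinear trace inequality
`∫_𝕋 |𝕀_α[F]| dν ≲ (sup_{n,ω} m^{(1-α)n} ν(ω)) ‖F‖_{L¹}`. -/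
def TraceIneq (W : Set (ι → E')) (φ : (ι → E') → ι → ℝ) (α : ℝ) : Prop :=
  ∃ C : ℝ, ∀ ν : @Measure (ℕ → ι) (treeMS ι), IsFiniteMeasure ν →
    ∀ F : Mart ι E', MemSpace W F → Simple F →
      ∀ A : ℝ,
        (∀ (n : ℕ) (c : Fin n → ι),
          (Fintype.card ι : ℝ) ^ (((1 : ℝ) - α) * n) * (ν (cyl n c)).toReal ≤ A) →
        ∫ γ, |Ialpha φ α F γ| ∂ν ≤ C * A * L1Norm F

/-- The Bellman main inequality for `G` on the Bellman domain. -/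
def MainInequality (W : Set (ι → E')) (φ : (ι → E') → ι → ℝ) (α : ℝ)
    (G : E' → ℝ → ℝ → ℝ → ℝ → ℝ) : Prop :=
  ∀ (X : ι → E') (y : ℝ) (Z T S : ι → ℝ),
    (∀ j, ‖X j‖ ≤ Z j) → (∀ j, 0 ≤ T j) → (∀ j, T j ≤ S j) →
    (fun j => X j - avg X) ∈ W →
    (Fintype.card ι : ℝ) ^ (-α) *
        ∑ j, G (X j) ((Fintype.card ι : ℝ) ^ α * y + φ (fun i => X i - avg X) j)
          (Z j) (T j) (S j)
      ≤ G (avg X) y ((Fintype.card ι : ℝ)⁻¹ * ∑ j, Z j) (∑ j, T j)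
          (max (∑ j, T j) ((Fintype.card ι : ℝ) ^ ((1 : ℝ) - α) * ⨆ j, S j))

/-- The boundary inequality `G(x, y, |x|, t, s) ≥ |y| t`. -/
def BoundaryIneq (G : E' → ℝ → ℝ → ℝ → ℝ → ℝ) : Prop :=
  ∀ (x : E') (y t s : ℝ), 0 ≤ t → t ≤ s → |y| * t ≤ G x y ‖x‖ t s

/-- A supersolution: main inequality + boundary inequality. -/
def Supersolution (W : Set (ι → E')) (φ : (ι → E') → ι → ℝ) (α : ℝ)
    (G : E' → ℝ → ℝ → ℝ → ℝ → ℝ) : Prop :=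
  MainInequality W φ α G ∧ BoundaryIneq G

end Normed

section Proof9

variable {E : Type} [NormedAddCommGroup E] [NormedSpace ℝ E]
variable {m : ℕ}

/-- Bellman variable `z`: the martingale generated by `‖F_N‖`. -/
noncomputable def zf (F : Mart (Fin m) E) (N : ℕ) : (n : ℕ) → (Fin n → Fin m) → ℝ
  | n, c =>
    if N ≤ n then ‖F.val n c‖
    else (m : ℝ)⁻¹ * ∑ j : Fin m, zf F N (n + 1) (Fin.snoc c j)
  termination_by n _ => N - n
  decreasing_by omega

/-- Bellman variable `s`, defined by downward recursion from level `N`. -/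
noncomputable def sf (ν : @Measure (ℕ → Fin m) (treeMS (Fin m))) (α A : ℝ) (N : ℕ) :
    (n : ℕ) → (Fin n → Fin m) → ℝ
  | n, c =>
    if N ≤ n then A * (m : ℝ) ^ ((α - 1) * n)
    else max ((ν (cyl n c)).toReal)
      ((m : ℝ) ^ ((1 : ℝ) - α) * ⨆ j : Fin m, sf ν α A N (n + 1) (Fin.snoc c j))
  termination_by n _ => N - n
  decreasing_by omega

/-- Bellman variable `y`: the rescaled partial martingale transform. -/
noncomputable def yf (φ : (Fin m → E) → Fin m → ℝ) (α : ℝ) (F : Mart (Fin m) E) :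
    (n : ℕ) → (Fin n → Fin m) → ℝ
  | 0, _ => 0
  | n + 1, c => (m : ℝ) ^ α * yf φ α F n (Fin.init c)
      + φ (diff F n (Fin.init c)) (c (Fin.last n))

theorem zf_def (F : Mart (Fin m) E) (N n : ℕ) (c : Fin n → Fin m) :
    zf F N n c = if N ≤ n then ‖F.val n c‖
      else (m : ℝ)⁻¹ * ∑ j : Fin m, zf F N (n + 1) (Fin.snoc c j) := by
  rw [zf]

theorem sf_def (ν : @Measure (ℕ → Fin m) (treeMS (Fin m))) (α A : ℝ) (N n : ℕ)
    (c : Fin n → Fin m) :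
    sf ν α A N n c = if N ≤ n then A * (m : ℝ) ^ ((α - 1) * n)
      else max ((ν (cyl n c)).toReal)
        ((m : ℝ) ^ ((1 : ℝ) - α) * ⨆ j : Fin m, sf ν α A N (n + 1) (Fin.snoc c j)) := by
  rw [sf]

theorem val_succ_of_diff_zero {F : Mart (Fin m) E} {n : ℕ} {c : Fin n → Fin m}
    (h : diff F n c = 0) (j : Fin m) :
    F.val (n + 1) (Fin.snoc c j) = F.val n c := by
  have := congrFun h j
  simpa [diff, sub_eq_zero] using this

theorem zf_rec (hm : m ≠ 0) {F : Mart (Fin m) E} {N : ℕ}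
    (hN : ∀ n, N ≤ n → ∀ c : Fin n → Fin m, diff F n c = 0)
    (n : ℕ) (c : Fin n → Fin m) :
    zf F N n c = (m : ℝ)⁻¹ * ∑ j : Fin m, zf F N (n + 1) (Fin.snoc c j) := by
  rw [zf_def]
  by_cases h : N ≤ n
  · rw [if_pos h]
    have hkid : ∀ j : Fin m, zf F N (n + 1) (Fin.snoc c j) = ‖F.val n c‖ := by
      intro j
      rw [zf_def, if_pos (by omega : N ≤ n + 1), val_succ_of_diff_zero (hN n h c) j]
    simp only [hkid, Finset.sum_const, Finset.card_univ, Fintype.card_fin, nsmul_eq_mul]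
    have hm0 : (m : ℝ) ≠ 0 := by exact_mod_cast hm
    field_simp
  · rw [if_neg h]

theorem norm_le_zf (F : Mart (Fin m) E) (N : ℕ) :
    ∀ (n : ℕ) (c : Fin n → Fin m), ‖F.val n c‖ ≤ zf F N n c
  | n, c => by
    rw [zf_def]
    by_cases h : N ≤ n
    · rw [if_pos h]
    · rw [if_neg h]
      have h1 : ∀ j : Fin m, ‖F.val (n + 1) (Fin.snoc c j)‖ ≤ zf F N (n + 1) (Fin.snoc c j) :=
        fun j => norm_le_zf F N (n + 1) (Fin.snoc c j)
      calc ‖F.val n c‖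
          = (m : ℝ)⁻¹ * ‖∑ j : Fin m, F.val (n + 1) (Fin.snoc c j)‖ := by
            rw [F.avg_eq n c, norm_smul]
            simp [abs_of_nonneg]
        _ ≤ (m : ℝ)⁻¹ * ∑ j : Fin m, ‖F.val (n + 1) (Fin.snoc c j)‖ := by
            apply mul_le_mul_of_nonneg_left (norm_sum_le _ _)
            positivity
        _ ≤ (m : ℝ)⁻¹ * ∑ j : Fin m, zf F N (n + 1) (Fin.snoc c j) := by
            apply mul_le_mul_of_nonneg_left (Finset.sum_le_sum fun j _ => h1 j)
            positivity
  termination_by n _ => N - n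
  decreasing_by omega

theorem zf_nonneg (F : Mart (Fin m) E) (N n : ℕ) (c : Fin n → Fin m) :
    0 ≤ zf F N n c :=
  le_trans (norm_nonneg _) (norm_le_zf F N n c)

theorem measurableSet_cyl (n : ℕ) (c : Fin n → Fin m) :
    MeasurableSet[treeMS (Fin m)] (cyl n c) := by
  letI := treeMS (Fin m)
  have h : cyl n c = ⋂ i : Fin n, (fun γ : ℕ → Fin m => γ (i : ℕ)) ⁻¹' {c i} := by
    ext γ; simp [cyl, Set.mem_iInter]
  rw [h]
  exact MeasurableSet.iInter fun i => (measurable_pi_apply (i : ℕ)) (by trivial)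

theorem cyl_eq_iUnion (n : ℕ) (c : Fin n → Fin m) :
    cyl n c = ⋃ j : Fin m, cyl (n + 1) (Fin.snoc c j) := by
  ext γ
  simp only [Set.mem_iUnion, cyl, Set.mem_setOf_eq]
  constructor
  · intro h
    refine ⟨γ n, fun i => ?_⟩
    induction i using Fin.lastCases with
    | last => simp [Fin.snoc_last]
    | cast i => simpa [Fin.snoc_castSucc] using h i
  · rintro ⟨j, h⟩
    intro i
    have := h (Fin.castSucc i)
    simpa [Fin.snoc_castSucc] using this

theorem measure_cyl_add (ν : @Measure (ℕ → Fin m) (treeMS (Fin m))) [IsFiniteMeasure ν]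
    (n : ℕ) (c : Fin n → Fin m) :
    (ν (cyl n c)).toReal = ∑ j : Fin m, (ν (cyl (n + 1) (Fin.snoc c j))).toReal := by
  have hdisj : Pairwise (Function.onFun Disjoint
      fun j : Fin m => cyl (n + 1) (Fin.snoc c j)) := by
    intro j k hjk
    simp only [Function.onFun, Set.disjoint_left]
    intro γ hγ hγ'
    apply hjk
    have h1 := hγ (Fin.last n)
    have h2 := hγ' (Fin.last n)
    simp only [Fin.snoc_last] at h1 h2
    rw [← h1, ← h2]
  letI := treeMS (Fin m)
  have hmeas := measure_iUnion (μ := ν) hdisj (fun j => measurableSet_cyl _ _)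
  rw [← cyl_eq_iUnion, tsum_fintype] at hmeas
  rw [hmeas, ENNReal.toReal_sum]
  intro j _
  exact measure_ne_top ν _
theorem rpow_mul_rpow (hm0 : (0:ℝ) < m) (a b : ℝ) :
    (m : ℝ) ^ a * (m : ℝ) ^ b = (m : ℝ) ^ (a + b) :=
  (Real.rpow_add hm0 a b).symm

theorem t_le_bound (hm0 : (0:ℝ) < m) {α A t : ℝ} {n : ℕ}
    (h : (m : ℝ) ^ (((1:ℝ) - α) * n) * t ≤ A) :
    t ≤ A * (m : ℝ) ^ ((α - 1) * (n : ℝ)) := by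
  have hp : (0:ℝ) < (m : ℝ) ^ (((1:ℝ) - α) * (n:ℝ)) := Real.rpow_pos_of_pos hm0 _
  have hq : (0:ℝ) < (m : ℝ) ^ ((α - 1) * (n:ℝ)) := Real.rpow_pos_of_pos hm0 _
  have key : (m : ℝ) ^ ((α - 1) * (n : ℝ)) * (m : ℝ) ^ (((1:ℝ) - α) * n) = 1 := by
    rw [rpow_mul_rpow hm0]
    rw [show (α - 1) * (n:ℝ) + ((1:ℝ) - α) * n = 0 by ring, Real.rpow_zero]
  calc t = (m : ℝ) ^ ((α - 1) * (n : ℝ)) * ((m : ℝ) ^ (((1:ℝ) - α) * n) * t) := by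
        rw [← mul_assoc, key, one_mul]
    _ ≤ (m : ℝ) ^ ((α - 1) * (n : ℝ)) * A := by
        exact mul_le_mul_of_nonneg_left h hq.le
    _ = A * (m : ℝ) ^ ((α - 1) * (n : ℝ)) := mul_comm _ _

variable {ν : @Measure (ℕ → Fin m) (treeMS (Fin m))}

theorem sf_le_bound (hm : 2 ≤ m) [IsFiniteMeasure ν] {α A : ℝ} {N : ℕ}
    (hA : ∀ (n : ℕ) (c : Fin n → Fin m),
      (m : ℝ) ^ (((1:ℝ) - α) * n) * (ν (cyl n c)).toReal ≤ A) :
    ∀ (n : ℕ) (c : Fin n → Fin m), sf ν α A N n c ≤ A * (m : ℝ) ^ ((α - 1) * (n : ℝ))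
  | n, c => by
    have hm0 : (0:ℝ) < m := by positivity
    rw [sf_def]
    by_cases h : N ≤ n
    · rw [if_pos h]
    · rw [if_neg h]
      apply max_le
      · exact t_le_bound hm0 (hA n c)
      · have hkid : ∀ j : Fin m, sf ν α A N (n + 1) (Fin.snoc c j)
            ≤ A * (m : ℝ) ^ ((α - 1) * ((n:ℝ) + 1)) := by
          intro j
          have := sf_le_bound (N := N) hm hA (n + 1) (Fin.snoc c j)
          simpa using this
        haveI : Nonempty (Fin m) := ⟨⟨0, by omega⟩⟩
        have hsup : (⨆ j : Fin m, sf ν α A N (n + 1) (Fin.snoc c j))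
            ≤ A * (m : ℝ) ^ ((α - 1) * ((n:ℝ) + 1)) := ciSup_le hkid
        calc (m : ℝ) ^ ((1:ℝ) - α) * ⨆ j : Fin m, sf ν α A N (n + 1) (Fin.snoc c j)
            ≤ (m : ℝ) ^ ((1:ℝ) - α) * (A * (m : ℝ) ^ ((α - 1) * ((n:ℝ) + 1))) :=
              mul_le_mul_of_nonneg_left hsup (Real.rpow_nonneg hm0.le _)
          _ = A * ((m : ℝ) ^ ((1:ℝ) - α) * (m : ℝ) ^ ((α - 1) * ((n:ℝ) + 1))) := by ring
          _ = A * (m : ℝ) ^ ((α - 1) * (n : ℝ)) := by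
              rw [rpow_mul_rpow hm0]
              congr 1
              ring_nf
  termination_by n _ => N - n
  decreasing_by omega

theorem t_le_sf (hm : 2 ≤ m) [IsFiniteMeasure ν] {α A : ℝ} {N : ℕ}
    (hA : ∀ (n : ℕ) (c : Fin n → Fin m),
      (m : ℝ) ^ (((1:ℝ) - α) * n) * (ν (cyl n c)).toReal ≤ A)
    (n : ℕ) (c : Fin n → Fin m) :
    (ν (cyl n c)).toReal ≤ sf ν α A N n c := by
  have hm0 : (0:ℝ) < m := by positivity
  rw [sf_def]
  by_cases h : N ≤ n
  · rw [if_pos h]; exact t_le_bound hm0 (hA n c)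
  · rw [if_neg h]; exact le_max_left _ _

theorem sf_match (hm : 2 ≤ m) [IsFiniteMeasure ν] {α A : ℝ} {N : ℕ}
    (hA : ∀ (n : ℕ) (c : Fin n → Fin m),
      (m : ℝ) ^ (((1:ℝ) - α) * n) * (ν (cyl n c)).toReal ≤ A)
    (n : ℕ) (c : Fin n → Fin m) :
    max ((ν (cyl n c)).toReal)
        ((m : ℝ) ^ ((1 : ℝ) - α) * ⨆ j : Fin m, sf ν α A N (n + 1) (Fin.snoc c j))
      = sf ν α A N n c := by
  have hm0 : (0:ℝ) < m := by positivity
  haveI : Nonempty (Fin m) := ⟨⟨0, by omega⟩⟩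
  by_cases h : N ≤ n
  · have hkid : ∀ j : Fin m, sf ν α A N (n + 1) (Fin.snoc c j)
        = A * (m : ℝ) ^ ((α - 1) * ((n:ℕ) + 1 : ℕ)) := by
      intro j
      rw [sf_def, if_pos (by omega : N ≤ n + 1)]
    rw [sf_def, if_pos h]
    simp only [hkid, ciSup_const]
    have he : (m : ℝ) ^ ((1:ℝ) - α) * (A * (m : ℝ) ^ ((α - 1) * ((n:ℕ) + 1 : ℕ)))
        = A * (m : ℝ) ^ ((α - 1) * (n : ℝ)) := by
      rw [mul_comm ((m : ℝ) ^ ((1:ℝ) - α)) _, mul_assoc, rpow_mul_rpow hm0]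
      congr 1
      push_cast
      ring_nf
    rw [he]
    exact max_eq_right (t_le_bound hm0 (hA n c))
  · rw [sf_def ν α A N n c, if_neg h]

theorem yf_succ (φ : (Fin m → E) → Fin m → ℝ) (α : ℝ) (F : Mart (Fin m) E)
    (n : ℕ) (c : Fin n → Fin m) (j : Fin m) :
    yf φ α F (n + 1) (Fin.snoc c j)
      = (m : ℝ) ^ α * yf φ α F n c + φ (diff F n c) j := by
  rw [yf, Fin.init_snoc, Fin.snoc_last]
theorem sum_snoc_eq {M : Type} [AddCommMonoid M] (n : ℕ) (g : (Fin (n + 1) → Fin m) → M) :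
    ∑ d : Fin (n + 1) → Fin m, g d
      = ∑ c : Fin n → Fin m, ∑ j : Fin m, g (Fin.snoc c j) := by
  rw [← Equiv.sum_comp (Fin.snocEquiv (fun _ => Fin m)) g, Fintype.sum_prod_type]
  have hfun : ∀ p : Fin m × (Fin n → Fin m),
      (Fin.snocEquiv (fun _ => Fin m)) p = Fin.snoc p.2 p.1 :=
    fun p => funext fun x => Fin.snocEquiv_apply _ _ _
  simp only [hfun]
  exact Finset.sum_comm

theorem phi_step {W : Set (Fin m → E)} {φ : (Fin m → E) → Fin m → ℝ}
    {α A : ℝ} {G : E → ℝ → ℝ → ℝ → ℝ → ℝ} (hm : 2 ≤ m)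
    (hMain : MainInequality W φ α G)
    [IsFiniteMeasure ν]
    {F : Mart (Fin m) E} (hF : MemSpace W F) {N : ℕ}
    (hN : ∀ n, N ≤ n → ∀ c : Fin n → Fin m, diff F n c = 0)
    (hA : ∀ (n : ℕ) (c : Fin n → Fin m),
      (m : ℝ) ^ (((1:ℝ) - α) * n) * (ν (cyl n c)).toReal ≤ A)
    (n : ℕ) :
    (m : ℝ) ^ (-(α * ((n : ℝ) + 1))) * ∑ c : Fin (n + 1) → Fin m,
        G (F.val (n + 1) c) (yf φ α F (n + 1) c) (zf F N (n + 1) c)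
          ((ν (cyl (n + 1) c)).toReal) (sf ν α A N (n + 1) c)
      ≤ (m : ℝ) ^ (-(α * (n : ℝ))) * ∑ c : Fin n → Fin m,
        G (F.val n c) (yf φ α F n c) (zf F N n c)
          ((ν (cyl n c)).toReal) (sf ν α A N n c) := by
  have hm0 : (0:ℝ) < m := by positivity
  have hm' : m ≠ 0 := by omega
  have key : ∀ c : Fin n → Fin m,
      (m : ℝ) ^ (-α) * ∑ j : Fin m,
        G (F.val (n + 1) (Fin.snoc c j)) (yf φ α F (n + 1) (Fin.snoc c j))
          (zf F N (n + 1) (Fin.snoc c j)) ((ν (cyl (n + 1) (Fin.snoc c j))).toReal)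
          (sf ν α A N (n + 1) (Fin.snoc c j))
      ≤ G (F.val n c) (yf φ α F n c) (zf F N n c)
          ((ν (cyl n c)).toReal) (sf ν α A N n c) := by
    intro c
    set X : Fin m → E := fun j => F.val (n + 1) (Fin.snoc c j) with hX
    have havg : avg X = F.val n c := (F.avg_eq n c).symm
    have hdiffeq : (fun j => X j - avg X) = diff F n c := by
      funext j
      rw [havg]
      rfl
    have h1 := hMain X (yf φ α F n c)
      (fun j => zf F N (n + 1) (Fin.snoc c j))
      (fun j => (ν (cyl (n + 1) (Fin.snoc c j))).toReal)
      (fun j => sf ν α A N (n + 1) (Fin.snoc c j))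
      (fun j => norm_le_zf F N (n + 1) (Fin.snoc c j))
      (fun j => ENNReal.toReal_nonneg)
      (fun j => t_le_sf hm hA (n + 1) (Fin.snoc c j))
      (hdiffeq ▸ hF n c)
    simp only [Fintype.card_fin, hdiffeq] at h1
    rw [havg, ← zf_rec hm' hN n c, ← measure_cyl_add ν n c] at h1
    rw [sf_match hm hA n c] at h1
    have hy : ∀ j : Fin m,
        (m : ℝ) ^ α * yf φ α F n c + φ (diff F n c) j
          = yf φ α F (n + 1) (Fin.snoc c j) := fun j => (yf_succ φ α F n c j).symm
    simp only [hy] at h1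
    exact h1
  rw [sum_snoc_eq]
  have hsplit : (m : ℝ) ^ (-(α * ((n : ℝ) + 1)))
      = (m : ℝ) ^ (-(α * (n : ℝ))) * (m : ℝ) ^ (-α) := by
    rw [rpow_mul_rpow hm0]
    congr 1
    ring
  rw [hsplit, mul_assoc, Finset.mul_sum]
  apply mul_le_mul_of_nonneg_left _ (Real.rpow_nonneg hm0.le _)
  calc ∑ c : Fin n → Fin m, (m : ℝ) ^ (-α) * ∑ j : Fin m,
        G (F.val (n + 1) (Fin.snoc c j)) (yf φ α F (n + 1) (Fin.snoc c j))
          (zf F N (n + 1) (Fin.snoc c j)) ((ν (cyl (n + 1) (Fin.snoc c j))).toReal)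
          (sf ν α A N (n + 1) (Fin.snoc c j))
      ≤ ∑ c : Fin n → Fin m,
        G (F.val n c) (yf φ α F n c) (zf F N n c)
          ((ν (cyl n c)).toReal) (sf ν α A N n c) := Finset.sum_le_sum fun c _ => key c
theorem zf_zero_le_L1Norm (hm : 2 ≤ m) {F : Mart (Fin m) E} {N : ℕ}
    (hN : ∀ n, N ≤ n → ∀ c : Fin n → Fin m, diff F n c = 0) :
    zf F N 0 default ≤ L1Norm F := by
  have hm0 : (0:ℝ) < m := by positivity
  have hm' : m ≠ 0 := by omega
  have hmR : (m:ℝ) ≠ 0 := ne_of_gt hm0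
  set f : ℕ → ℝ := fun n => ((m : ℝ) ^ n)⁻¹ * ∑ c : Fin n → Fin m, ‖F.val n c‖ with hf
  have zstep : ∀ n, ∑ c : Fin n → Fin m, zf F N n c
      = (m : ℝ)⁻¹ * ∑ d : Fin (n + 1) → Fin m, zf F N (n + 1) d := by
    intro n
    calc ∑ c : Fin n → Fin m, zf F N n c
        = ∑ c : Fin n → Fin m, (m : ℝ)⁻¹ * ∑ j : Fin m, zf F N (n + 1) (Fin.snoc c j) :=
          Finset.sum_congr rfl fun c _ => zf_rec hm' hN n c
      _ = (m : ℝ)⁻¹ * ∑ c : Fin n → Fin m, ∑ j : Fin m, zf F N (n + 1) (Fin.snoc c j) := by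
          rw [Finset.mul_sum]
      _ = (m : ℝ)⁻¹ * ∑ d : Fin (n + 1) → Fin m, zf F N (n + 1) d := by
          rw [sum_snoc_eq]
  have ziter : ∀ n, zf F N 0 default
      = ((m : ℝ) ^ n)⁻¹ * ∑ c : Fin n → Fin m, zf F N n c := by
    intro n
    induction n with
    | zero => simp
    | succ k ih =>
        rw [ih, zstep k]
        ring
  have hz0 : zf F N 0 default = f N := by
    rw [ziter N, hf]
    congr 1
    refine Finset.sum_congr rfl fun c _ => ?_
    rw [zf_def, if_pos le_rfl]
  have hstepf : ∀ n, N ≤ n → f (n + 1) = f n := by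
    intro n h
    have hsum : ∑ d : Fin (n + 1) → Fin m, ‖F.val (n + 1) d‖
        = (m : ℝ) * ∑ c : Fin n → Fin m, ‖F.val n c‖ := by
      rw [sum_snoc_eq]
      rw [Finset.mul_sum]
      refine Finset.sum_congr rfl fun c _ => ?_
      have : ∀ j : Fin m, ‖F.val (n + 1) (Fin.snoc c j)‖ = ‖F.val n c‖ :=
        fun j => by rw [val_succ_of_diff_zero (hN n h c) j]
      simp [this]
    rw [hf]
    simp only []
    rw [hsum]
    field_simp
    ring
  have hconst : ∀ n, N ≤ n → f n = f N := by
    intro n h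
    induction n, h using Nat.le_induction with
    | base => rfl
    | succ n hn ih => rw [hstepf n hn, ih]
  have hbdd : BddAbove (Set.range f) := by
    apply BddAbove.mono _ ((Set.finite_Iic N).image f).bddAbove
    rintro x ⟨n, rfl⟩
    by_cases h : n ≤ N
    · exact ⟨n, Set.mem_Iic.mpr h, rfl⟩
    · exact ⟨N, Set.mem_Iic.mpr le_rfl, (hconst n (by omega)).symm⟩
  have hL1 : L1Norm F = ⨆ n, f n := by
    simp only [L1Norm, Fintype.card_fin, hf]
  rw [hL1, hz0]
  exact le_ciSup hbdd N

theorem L1Norm_nonneg (F : Mart (Fin m) E) : 0 ≤ L1Norm F :=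
  Real.iSup_nonneg fun n => by positivity

theorem yf_partial (hm : 2 ≤ m) (φ : (Fin m → E) → Fin m → ℝ)
    (α : ℝ) (F : Mart (Fin m) E) (γ : ℕ → Fin m) :
    ∀ n : ℕ, (m : ℝ) ^ (α * (1 - (n : ℝ))) * yf φ α F n (fun i : Fin n => γ i)
      = ∑ k ∈ Finset.range n,
          (m : ℝ) ^ (-(α * (k : ℝ))) * φ (diff F k (fun i : Fin k => γ i)) (γ k) := by
  have hm0 : (0:ℝ) < m := by positivity
  intro n
  induction n with
  | zero => simp [yf]
  | succ n ih =>
      rw [Finset.sum_range_succ, ← ih]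
      have h1 : yf φ α F (n + 1) (fun i : Fin (n + 1) => γ i)
          = (m : ℝ) ^ α * yf φ α F n (fun i : Fin n => γ i)
            + φ (diff F n (fun i : Fin n => γ i)) (γ n) := by
        rw [yf]
        rfl
      rw [h1]
      have e1 : (m : ℝ) ^ (α * (1 - ((n + 1 : ℕ) : ℝ))) * (m : ℝ) ^ α
          = (m : ℝ) ^ (α * (1 - (n : ℝ))) := by
        rw [rpow_mul_rpow hm0]
        congr 1
        push_cast
        ring_nf
      have e2 : (m : ℝ) ^ (α * (1 - ((n + 1 : ℕ) : ℝ))) = (m : ℝ) ^ (-(α * (n : ℝ))) := by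
        congr 1
        push_cast
        ring_nf
      rw [mul_add, ← mul_assoc, e1, e2]

theorem ialpha_eq (hm : 2 ≤ m) {φ : (Fin m → E) → Fin m → ℝ} (hφ0 : φ 0 = 0)
    {α : ℝ} {F : Mart (Fin m) E} {N : ℕ}
    (hN : ∀ n, N ≤ n → ∀ c : Fin n → Fin m, diff F n c = 0)
    (γ : ℕ → Fin m) :
    Ialpha φ α F γ = (m : ℝ) ^ (α * (1 - (N : ℝ))) * yf φ α F N (fun i : Fin N => γ i) := by
  have hzero : ∀ n ∉ Finset.range N,
      (Fintype.card (Fin m) : ℝ) ^ (-(α * (n:ℕ))) * φ (diff F n (fun i : Fin n => γ i)) (γ n)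
        = 0 := by
    intro n hn
    rw [hN n (by simpa using hn) _, hφ0]
    simp
  rw [Ialpha, tsum_eq_sum hzero, yf_partial hm φ α F γ N]
  refine Finset.sum_congr rfl fun k _ => ?_
  rw [Fintype.card_fin]

theorem integral_abs_ialpha (hm : 2 ≤ m) [IsFiniteMeasure ν]
    {φ : (Fin m → E) → Fin m → ℝ} (hφ0 : φ 0 = 0)
    {α : ℝ} {F : Mart (Fin m) E} {N : ℕ}
    (hN : ∀ n, N ≤ n → ∀ c : Fin n → Fin m, diff F n c = 0) :
    ∫ γ, |Ialpha φ α F γ| ∂ν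
      = ∑ c : Fin N → Fin m,
          (ν (cyl N c)).toReal * ((m : ℝ) ^ (α * (1 - (N : ℝ))) * |yf φ α F N c|) := by
  letI := treeMS (Fin m)
  have hm0 : (0:ℝ) < m := by positivity
  have hpt : ∀ γ : ℕ → Fin m, |Ialpha φ α F γ|
      = ∑ c : Fin N → Fin m, Set.indicator (cyl N c)
          (fun _ => (m : ℝ) ^ (α * (1 - (N : ℝ))) * |yf φ α F N c|) γ := by
    intro γ
    set c₀ : Fin N → Fin m := fun i => γ i with hc₀
    rw [Finset.sum_eq_single_of_mem c₀ (Finset.mem_univ _) ?_]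
    · rw [Set.indicator_of_mem (show γ ∈ cyl N c₀ from fun i => rfl)]
      rw [ialpha_eq hm hφ0 hN γ, abs_mul, abs_of_nonneg (Real.rpow_nonneg hm0.le _)]
    · intro b _ hb
      apply Set.indicator_of_notMem
      intro hmem
      exact hb (funext fun i => (hmem i).symm)
  calc ∫ γ, |Ialpha φ α F γ| ∂ν
      = ∫ γ, (∑ c : Fin N → Fin m, Set.indicator (cyl N c)
          (fun _ => (m : ℝ) ^ (α * (1 - (N : ℝ))) * |yf φ α F N c|) γ) ∂ν := by
        simp only [hpt]
    _ = ∑ c : Fin N → Fin m, ∫ γ, Set.indicator (cyl N c)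
          (fun _ => (m : ℝ) ^ (α * (1 - (N : ℝ))) * |yf φ α F N c|) γ ∂ν := by
        apply MeasureTheory.integral_finset_sum
        intro c _
        exact (MeasureTheory.integrable_const _).indicator (measurableSet_cyl N c)
    _ = ∑ c : Fin N → Fin m,
          (ν (cyl N c)).toReal * ((m : ℝ) ^ (α * (1 - (N : ℝ))) * |yf φ α F N c|) := by
        refine Finset.sum_congr rfl fun c _ => ?_
        rw [MeasureTheory.integral_indicator_const _ (measurableSet_cyl N c), smul_eq_mul]
        rfl

end Proof9

/-- Corollary `SuperSolutionCor`: if there is a function `G` on the Bellman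
domain satisfying the main inequality, the boundary inequality, and `G(x,0,z,t,s) ≤ C₀ z s`,
then the bilinear trace inequality holds, with a constant depending only on `C₀`. -/
theorem statement9 (m ℓ : ℕ) (hm : 2 ≤ m) (hℓ : 1 ≤ ℓ)
    (α : ℝ) (hα : α ∈ Set.Ioo (0 : ℝ) 1) (C₀ : ℝ) :
    ∃ C : ℝ,
      ∀ W : Submodule ℝ (Fin m → EuclideanSpace ℝ (Fin ℓ)), (∀ w ∈ W, ∑ j, w j = 0) →
      ∀ φ : (Fin m → EuclideanSpace ℝ (Fin ℓ)) →ₗ[ℝ] (Fin m → ℝ), (∀ w ∈ W, ∑ j, φ w j = 0) →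
      ∀ G : EuclideanSpace ℝ (Fin ℓ) → ℝ → ℝ → ℝ → ℝ → ℝ,
        MainInequality (W : Set (Fin m → EuclideanSpace ℝ (Fin ℓ))) (fun w => φ w) α G →
        BoundaryIneq G →
        (∀ (x : EuclideanSpace ℝ (Fin ℓ)) (z t s : ℝ),
          ‖x‖ ≤ z → 0 ≤ t → t ≤ s → G x 0 z t s ≤ C₀ * (z * s)) →
        ∀ ν : @Measure (ℕ → Fin m) (treeMS (Fin m)), IsFiniteMeasure ν →
        ∀ F : Mart (Fin m) (EuclideanSpace ℝ (Fin ℓ)),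
          MemSpace (W : Set (Fin m → EuclideanSpace ℝ (Fin ℓ))) F → Simple F →
          ∀ A : ℝ,
            (∀ (n : ℕ) (c : Fin n → Fin m),
              (m : ℝ) ^ (((1 : ℝ) - α) * n) * (ν (cyl n c)).toReal ≤ A) →
            ∫ γ, |Ialpha (fun w => φ w) α F γ| ∂ν ≤ C * A * L1Norm F := by
  obtain ⟨hα0, hα1⟩ := hα
  refine ⟨(m : ℝ) ^ α * C₀, ?_⟩
  intro W hW φ hφ G hMain hBdry hG0 ν hν F hF hSimple A hA
  haveI := hν
  obtain ⟨N, hN⟩ := hSimple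
  have hm0 : (0:ℝ) < m := by positivity
  have hm' : m ≠ 0 := by omega
  haveI : Nonempty (Fin m) := ⟨⟨0, by omega⟩⟩
  set φ' : (Fin m → EuclideanSpace ℝ (Fin ℓ)) → Fin m → ℝ := fun w => φ w with hφ'
  have hφ0 : φ' 0 = 0 := by simp [hφ']
  have hC₀ : 0 ≤ C₀ := by
    set x₀ : EuclideanSpace ℝ (Fin ℓ) := EuclideanSpace.single ⟨0, by omega⟩ (1:ℝ) with hx₀
    have hx₀n : ‖x₀‖ = 1 := by simp [hx₀]
    have h1 := hBdry x₀ 0 1 1 zero_le_one le_rfl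
    have h2 := hG0 x₀ ‖x₀‖ 1 1 le_rfl zero_le_one le_rfl
    rw [hx₀n] at h1 h2
    simp at h1 h2
    linarith
  have hA0 : 0 ≤ A := by
    have h := hA 0 default
    simp at h
    exact le_trans ENNReal.toReal_nonneg h
  set Φ : ℕ → ℝ := fun n => (m : ℝ) ^ (-(α * (n : ℝ))) * ∑ c : Fin n → Fin m,
    G (F.val n c) (yf φ' α F n c) (zf F N n c) ((ν (cyl n c)).toReal)
      (sf ν α A N n c) with hΦ
  have hstep : ∀ n, Φ (n + 1) ≤ Φ n := by
    intro n
    have h := phi_step (ν := ν) hm hMain hF hN hA n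
    simp only [hΦ, Nat.cast_add, Nat.cast_one]
    exact h
  have hchain : ∀ n, Φ n ≤ Φ 0 := by
    intro n
    induction n with
    | zero => exact le_rfl
    | succ k ih => exact le_trans (hstep k) ih
  have hlow : (m : ℝ) ^ (-(α * (N : ℝ))) *
      ∑ c : Fin N → Fin m, |yf φ' α F N c| * (ν (cyl N c)).toReal ≤ Φ N := by
    rw [hΦ]
    apply mul_le_mul_of_nonneg_left _ (Real.rpow_nonneg hm0.le _)
    apply Finset.sum_le_sum
    intro c _
    have hz : zf F N N c = ‖F.val N c‖ := by rw [zf_def, if_pos le_rfl]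
    have h := hBdry (F.val N c) (yf φ' α F N c) ((ν (cyl N c)).toReal)
      (sf ν α A N N c) ENNReal.toReal_nonneg (t_le_sf hm hA N c)
    rw [← hz] at h
    exact h
  have hup : Φ 0 ≤ C₀ * (L1Norm F * A) := by
    have hΦ0 : Φ 0 = G (F.val 0 default) (yf φ' α F 0 default) (zf F N 0 default)
        ((ν (cyl 0 default)).toReal) (sf ν α A N 0 default) := by
      rw [hΦ]
      simp only [Nat.cast_zero, mul_zero, neg_zero, Real.rpow_zero, one_mul]
      exact Fintype.sum_unique _
    rw [hΦ0]
    have hy0 : yf φ' α F 0 default = 0 := by rw [yf]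
    rw [hy0]
    have h1 := hG0 (F.val 0 default) (zf F N 0 default) ((ν (cyl 0 default)).toReal)
      (sf ν α A N 0 default) (norm_le_zf F N 0 default) ENNReal.toReal_nonneg
      (t_le_sf hm hA 0 default)
    refine le_trans h1 ?_
    apply mul_le_mul_of_nonneg_left _ hC₀
    have hz1 : zf F N 0 default ≤ L1Norm F := zf_zero_le_L1Norm hm hN
    have hz0' : 0 ≤ zf F N 0 default := zf_nonneg F N 0 default
    have hs : sf ν α A N 0 default ≤ A := by
      have h := sf_le_bound (N := N) hm hA 0 default
      simpa using h
    calc zf F N 0 default * sf ν α A N 0 default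
        ≤ zf F N 0 default * A := mul_le_mul_of_nonneg_left hs hz0'
      _ ≤ L1Norm F * A := mul_le_mul_of_nonneg_right hz1 hA0
  have hint := integral_abs_ialpha (ν := ν) (α := α) hm hφ0 hN
  rw [hint]
  have e1 : ∑ c : Fin N → Fin m,
        (ν (cyl N c)).toReal * ((m : ℝ) ^ (α * (1 - (N : ℝ))) * |yf φ' α F N c|)
      = (m : ℝ) ^ (α * (1 - (N : ℝ))) *
        ∑ c : Fin N → Fin m, |yf φ' α F N c| * (ν (cyl N c)).toReal := by
    rw [Finset.mul_sum]
    exact Finset.sum_congr rfl fun c _ => by ring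
  rw [e1]
  have h2 : ∑ c : Fin N → Fin m, |yf φ' α F N c| * (ν (cyl N c)).toReal
      ≤ (m : ℝ) ^ (α * (N : ℝ)) * Φ N := by
    have hpos : (0:ℝ) < (m : ℝ) ^ (α * (N : ℝ)) := Real.rpow_pos_of_pos hm0 _
    have key : (m : ℝ) ^ (α * (N : ℝ)) * (m : ℝ) ^ (-(α * (N : ℝ))) = 1 := by
      rw [rpow_mul_rpow hm0]
      simp
    calc ∑ c : Fin N → Fin m, |yf φ' α F N c| * (ν (cyl N c)).toReal
        = (m : ℝ) ^ (α * (N : ℝ)) * ((m : ℝ) ^ (-(α * (N : ℝ))) *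
            ∑ c : Fin N → Fin m, |yf φ' α F N c| * (ν (cyl N c)).toReal) := by
          rw [← mul_assoc, key, one_mul]
      _ ≤ (m : ℝ) ^ (α * (N : ℝ)) * Φ N := mul_le_mul_of_nonneg_left hlow hpos.le
  calc (m : ℝ) ^ (α * (1 - (N : ℝ))) *
        ∑ c : Fin N → Fin m, |yf φ' α F N c| * (ν (cyl N c)).toReal
      ≤ (m : ℝ) ^ (α * (1 - (N : ℝ))) * ((m : ℝ) ^ (α * (N : ℝ)) * Φ N) :=
        mul_le_mul_of_nonneg_left h2 (Real.rpow_nonneg hm0.le _)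
    _ = (m : ℝ) ^ α * Φ N := by
        rw [← mul_assoc, rpow_mul_rpow hm0]
        congr 2
        ring
    _ ≤ (m : ℝ) ^ α * Φ 0 :=
        mul_le_mul_of_nonneg_left (hchain N) (Real.rpow_nonneg hm0.le _)
    _ ≤ (m : ℝ) ^ α * (C₀ * (L1Norm F * A)) :=
        mul_le_mul_of_nonneg_left hup (Real.rpow_nonneg hm0.le _)
    _ = (m : ℝ) ^ α * C₀ * A * L1Norm F := by ring


end TracePaper
end
end

section
/- For every μ ≥ 4 and d ≥ 2, the space W_div is a geometric space of order (d−1)/d; that is, its function κ satisfies κ(θ) = ((d−1)/d)·(log m)·(1−θ) = (d−1)·(log μ)·(1−θ) for all θ ∈ [0,1]. -/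
open MeasureTheory Finset

noncomputable section

namespace TracePaper

variable {ι : Type} [Fintype ι]
variable {E : Type} [AddCommGroup E] [Module ℝ E]

section GroupSetting

/-- The group `G = (ℤ/μ)^d`, identified with the branching index set `{1, …, m}`, `m = μ^d`. -/
abbrev Gp (μ d : ℕ) : Type := Fin d → ZMod μ

/-- The character value `e^{2πi z/μ}` for `z ∈ ℤ/μ`. -/
def ch (μ : ℕ) (z : ZMod μ) : ℂ :=
  Complex.exp (2 * Real.pi * Complex.I * (z.val : ℂ) / (μ : ℂ))

/-- The standard generators `e_j` of `(ℤ/μ)^d`. -/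
def egen (μ d : ℕ) (j : Fin d) : Gp μ d := Pi.single j 1

variable (μ d : ℕ) [NeZero μ]

/-- The martingale analogue `W_∇` of the space `BV(ℝ^d)`: discrete gradients of real-valued
functions on `G`. -/
def Wgrad : Set (Gp μ d → EuclideanSpace ℂ (Fin d)) :=
  {g | (∑ x, g x = 0) ∧
    ∃ f : Gp μ d → ℝ, ∀ (x : Gp μ d) (j : Fin d),
      g x j = (f (x + egen μ d j) : ℂ) - (f x : ℂ)}

/-- The martingale analogue `W_div` of the space of divergence-free measures. -/
def Wdiv : Set (Gp μ d → EuclideanSpace ℂ (Fin d)) :=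
  {g | (∑ x, g x = 0) ∧
    ∀ x : Gp μ d, ∑ j, (g (x + egen μ d j) j - g x j) = 0}

/-- The Hermitian inner product `⟨u, v⟩ = ∑_j conj(u_j) v_j` on `ℂ^d`. -/
def hermC (u v : EuclideanSpace ℂ (Fin d)) : ℂ :=
  ∑ j, (starRingEnd ℂ) (u j) * v j

/-- The translation invariant (convolution) operator `φ[f](x) = ∑_y ⟨K(x-y), f(y)⟩`. -/
def convOp (K : Gp μ d → EuclideanSpace ℂ (Fin d))
    (f : Gp μ d → EuclideanSpace ℂ (Fin d)) (x : Gp μ d) : ℂ :=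
  ∑ y, hermC d (K (x - y)) (f y)

end GroupSetting

section Statement11Aux

variable {μ d : ℕ} [NeZero μ]

lemma card_Gp : Fintype.card (Gp μ d) = μ ^ d := by
  simp [Gp, Fintype.card_fun, ZMod.card]

lemma card_fiber (j0 : Fin d) (k : ZMod μ) :
    (Finset.univ.filter fun x : Gp μ d => x j0 = k).card = μ ^ (d - 1) := by
  rw [← Fintype.card_subtype]
  have e : {x : Gp μ d // x j0 = k} ≃ ({j : Fin d // j ≠ j0} → ZMod μ) :=
  { toFun := fun x j => x.1 j.1
    invFun := fun y => ⟨fun j => if h : j = j0 then k else y ⟨j, h⟩, by simp⟩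
    left_inv := by
      rintro ⟨x, hx⟩
      ext j
      by_cases h : j = j0
      · subst h; simp [hx]
      · simp [h]
    right_inv := by
      intro y; funext j
      simp [j.2] }
  rw [Fintype.card_congr e, Fintype.card_fun, ZMod.card]
  congr 1
  rw [Fintype.card_subtype_compl, Fintype.card_subtype_eq, Fintype.card_fin]

lemma card_line (j0 : Fin d) :
    (Finset.univ.filter fun x : Gp μ d => ∀ j, j ≠ j0 → x j = 0).card = μ := by
  rw [← Fintype.card_subtype]
  have e : {x : Gp μ d // ∀ j, j ≠ j0 → x j = 0} ≃ ZMod μ :=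
  { toFun := fun x => x.1 j0
    invFun := fun k => ⟨fun j => if j = j0 then k else 0, fun j hj => by simp [hj]⟩
    left_inv := by
      rintro ⟨x, hx⟩
      ext j
      by_cases h : j = j0
      · subst h; simp
      · simp [h, hx j h]
    right_inv := by intro k; simp }
  rw [Fintype.card_congr e, ZMod.card]

lemma sum_fiber_shift (j0 : Fin d) (c : Gp μ d) (k : ZMod μ) (v : Gp μ d → ℝ) :
    ∑ x ∈ Finset.univ.filter (fun x : Gp μ d => x j0 = k), v (x + c)
      = ∑ x ∈ Finset.univ.filter (fun x : Gp μ d => x j0 = k + c j0), v x := by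
  refine Finset.sum_nbij' (fun x => x + c) (fun x => x - c) ?_ ?_ ?_ ?_ ?_
  · intro a ha
    simp only [Finset.mem_filter, Finset.mem_univ, true_and] at ha ⊢
    simp [Pi.add_apply, ha]
  · intro a ha
    simp only [Finset.mem_filter, Finset.mem_univ, true_and] at ha ⊢
    simp [Pi.sub_apply, ha]
  · intro a _; simp
  · intro a _; simp
  · intro a _; rfl

lemma exists_nonneg_of_sum_zero {v : Gp μ d → ℝ} (h : ∑ x, v x = 0) :
    ∃ x : Gp μ d, 0 ≤ v x := by
  by_contra hc
  push_neg at hc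
  have : ∑ x : Gp μ d, v x < ∑ _x : Gp μ d, (0 : ℝ) :=
    Finset.sum_lt_sum_of_nonempty Finset.univ_nonempty (fun x _ => hc x)
  simp [h] at this

lemma mw_fiber_sum {v : Gp μ d → ℝ} (hv : v ∈ MW (Wdiv μ d)) :
    ∃ j0 : Fin d, ∀ k : ZMod μ,
      ∑ x ∈ Finset.univ.filter (fun x : Gp μ d => x j0 = k), v x = 0 := by
  obtain ⟨hsum, _hge, a, ha, hW⟩ := hv
  obtain ⟨_, hWd⟩ := hW
  obtain ⟨j0, hj0⟩ : ∃ j, a j ≠ 0 := by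
    by_contra h
    push_neg at h
    exact ha (by ext j; simpa using h j)
  set S : ZMod μ → ℝ :=
    fun k => ∑ x ∈ Finset.univ.filter (fun x : Gp μ d => x j0 = k), v x with hSdef
  have hstep : ∀ k, S (k + 1) = S k := by
    intro k
    have h1 : ∑ x ∈ Finset.univ.filter (fun x : Gp μ d => x j0 = k),
        (∑ j, ((v (x + egen μ d j) • a) j - (v x • a) j)) = 0 :=
      Finset.sum_eq_zero fun x _ => hWd x
    rw [Finset.sum_comm] at h1
    have key : ∀ j : Fin d,
        (∑ x ∈ Finset.univ.filter (fun x : Gp μ d => x j0 = k),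
          ((v (x + egen μ d j) • a) j - (v x • a) j))
        = ((S (k + egen μ d j j0) - S k : ℝ) : ℂ) * a j := by
      intro j
      rw [Finset.sum_sub_distrib]
      have e1 : ∑ x ∈ Finset.univ.filter (fun x : Gp μ d => x j0 = k),
          (v (x + egen μ d j) • a) j = ((S (k + egen μ d j j0) : ℝ) : ℂ) * a j := by
        simp only [PiLp.smul_apply, Complex.real_smul]
        rw [← Finset.sum_mul, ← Complex.ofReal_sum]
        have hs : ∑ x ∈ Finset.univ.filter (fun x : Gp μ d => x j0 = k), v (x + egen μ d j)
            = S (k + egen μ d j j0) := sum_fiber_shift j0 (egen μ d j) k v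
        rw [hs]
      have e2 : ∑ x ∈ Finset.univ.filter (fun x : Gp μ d => x j0 = k),
          (v x • a) j = ((S k : ℝ) : ℂ) * a j := by
        simp only [PiLp.smul_apply, Complex.real_smul]
        rw [← Finset.sum_mul, ← Complex.ofReal_sum]
      rw [e1, e2, ← sub_mul, ← Complex.ofReal_sub]
    have h2 : ∑ j : Fin d, ((S (k + egen μ d j j0) - S k : ℝ) : ℂ) * a j = 0 := by
      rw [← h1]
      exact Finset.sum_congr rfl fun j _ => (key j).symm
    have h3 : ((S (k + 1) - S k : ℝ) : ℂ) * a j0 = 0 := by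
      have hsum3 : (∑ j : Fin d, ((S (k + egen μ d j j0) - S k : ℝ) : ℂ) * a j)
          = ((S (k + egen μ d j0 j0) - S k : ℝ) : ℂ) * a j0 :=
        Finset.sum_eq_single (s := Finset.univ)
          (f := fun j : Fin d => ((S (k + egen μ d j j0) - S k : ℝ) : ℂ) * a j) j0
          (fun j _ hj => by
            show ((S (k + egen μ d j j0) - S k : ℝ) : ℂ) * a j = 0
            have hz : egen μ d j j0 = 0 := Pi.single_eq_of_ne hj.symm 1
            rw [hz, add_zero, sub_self, Complex.ofReal_zero, zero_mul])
          (fun h => absurd (Finset.mem_univ j0) h)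
      have hone : egen μ d j0 j0 = 1 := Pi.single_eq_same j0 1
      rw [hone] at hsum3
      rw [← hsum3]
      exact h2
    rcases mul_eq_zero.mp h3 with h | h
    · have : S (k + 1) - S k = 0 := by exact_mod_cast h
      linarith
    · exact absurd h hj0
  have hnat : ∀ n : ℕ, S (n : ZMod μ) = S 0 := by
    intro n
    induction n with
    | zero => simp
    | succ n ih =>
      have : ((n + 1 : ℕ) : ZMod μ) = (n : ZMod μ) + 1 := by push_cast; ring
      rw [this, hstep]; exact ih
  have hconst : ∀ k, S k = S 0 := by
    intro k
    have := hnat k.val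
    rwa [ZMod.natCast_rightInverse k] at this
  have hsum0 : ∑ k : ZMod μ, S k = 0 := by
    rw [hSdef]
    rw [Finset.sum_fiberwise Finset.univ (fun x : Gp μ d => x j0) v]
    exact hsum
  have hcard : (∑ k : ZMod μ, S k) = (μ : ℝ) * S 0 := by
    rw [Finset.sum_congr rfl (fun k _ => hconst k), Finset.sum_const, Finset.card_univ,
      ZMod.card, nsmul_eq_mul]
  have hS0 : S 0 = 0 := by
    have hμ : (μ : ℝ) ≠ 0 := by
      exact_mod_cast (NeZero.ne μ)
    have := hsum0
    rw [hcard] at this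
    exact (mul_eq_zero.mp this).resolve_left hμ
  exact ⟨j0, fun k => (hconst k).trans hS0⟩

lemma mw_le (hd : 1 ≤ d) {v : Gp μ d → ℝ} (hv : v ∈ MW (Wdiv μ d)) (x0 : Gp μ d) :
    1 + v x0 ≤ (μ : ℝ) ^ (d - 1) := by
  obtain ⟨j0, hS⟩ := mw_fiber_sum hv
  have hge := hv.2.1
  have hx0 : x0 ∈ Finset.univ.filter (fun x : Gp μ d => x j0 = x0 j0) := by simp
  have h1 : 1 + v x0 ≤ ∑ x ∈ Finset.univ.filter (fun x : Gp μ d => x j0 = x0 j0), (1 + v x) :=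
    Finset.single_le_sum (f := fun x : Gp μ d => 1 + v x)
      (fun x _ => show (0:ℝ) ≤ 1 + v x by linarith [hge x]) hx0
  have h2 : ∑ x ∈ Finset.univ.filter (fun x : Gp μ d => x j0 = x0 j0), (1 + v x)
      = (μ : ℝ) ^ (d - 1) := by
    rw [Finset.sum_add_distrib, hS (x0 j0), add_zero, Finset.sum_const, card_fiber,
      nsmul_eq_mul, mul_one]
    push_cast
    ring
  linarith

lemma one_le_one_add_some {v : Gp μ d → ℝ} (h : ∑ x, v x = 0) :
    ∃ x : Gp μ d, (1 : ℝ) ≤ 1 + v x := by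
  obtain ⟨x, hx⟩ := exists_nonneg_of_sum_zero h
  exact ⟨x, by linarith⟩

lemma kappaV_le (hd : 1 ≤ d) {v : Gp μ d → ℝ} (hv : v ∈ MW (Wdiv μ d))
    {θ : ℝ} (hθ : θ ∈ Set.Icc (0 : ℝ) 1) :
    kappaV (Gp μ d) v θ ≤ ((d : ℝ) - 1) * Real.log μ * (1 - θ) := by
  have hμ1 : (1 : ℝ) ≤ (μ : ℝ) := by exact_mod_cast Nat.one_le_iff_ne_zero.mpr (NeZero.ne μ)
  set B : ℝ := (μ : ℝ) ^ (d - 1) with hBdef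
  have hB1 : (1 : ℝ) ≤ B := one_le_pow₀ hμ1
  have hBpos : (0 : ℝ) < B := by linarith
  have hbd : ∀ x, |1 + v x| ≤ B := fun x => by
    rw [abs_of_nonneg (by linarith [hv.2.1 x])]
    exact mw_le hd hv x
  have hlogB : Real.log B = ((d : ℝ) - 1) * Real.log μ := by
    rw [hBdef, Real.log_pow, Nat.cast_sub hd, Nat.cast_one]
  obtain ⟨xs, hxs⟩ := one_le_one_add_some (v := v) hv.1
  rcases eq_or_lt_of_le hθ.1 with h0 | h0
  · -- θ = 0
    rw [kappaV, if_pos h0.symm, ← h0]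
    have hub : (⨆ x, |1 + v x|) ≤ B := ciSup_le hbd
    have hlb : (1 : ℝ) ≤ ⨆ x, |1 + v x| := by
      refine le_trans ?_ (le_ciSup (Set.Finite.bddAbove (Set.finite_range _)) xs)
      rw [abs_of_nonneg (by linarith)]
      exact hxs
    calc Real.log (⨆ x, |1 + v x|) ≤ Real.log B := Real.log_le_log (by linarith) hub
      _ = ((d : ℝ) - 1) * Real.log μ * (1 - 0) := by rw [hlogB]; ring
  · -- 0 < θ
    have hθ1 : θ ≤ 1 := hθ.2
    have hθne : θ ≠ 0 := ne_of_gt h0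
    have hexp : (0 : ℝ) ≤ 1 / θ - 1 := by
      have : (1 : ℝ) ≤ 1 / θ := by
        rw [le_div_iff₀ h0]; linarith
      linarith
    rw [kappaV, if_neg hθne]
    have hcard : (0 : ℝ) < (Fintype.card (Gp μ d) : ℝ) := by
      exact_mod_cast Fintype.card_pos
    have hsum1 : ∑ x : Gp μ d, (1 + v x) = (Fintype.card (Gp μ d) : ℝ) := by
      rw [Finset.sum_add_distrib, hv.1, add_zero, Finset.sum_const, Finset.card_univ,
        nsmul_eq_mul, mul_one]
    have hterm : ∀ x : Gp μ d, |1 + v x| ^ (1 / θ) ≤ (1 + v x) * B ^ (1 / θ - 1) := by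
      intro x
      have hx0 : (0 : ℝ) ≤ 1 + v x := by linarith [hv.2.1 x]
      rw [abs_of_nonneg hx0]
      rcases eq_or_lt_of_le hx0 with he | hp
      · rw [← he, Real.zero_rpow (by positivity), zero_mul]
      · have hsplit : (1 + v x) ^ (1 / θ) = (1 + v x) * (1 + v x) ^ (1 / θ - 1) := by
          have h := Real.rpow_add hp 1 (1 / θ - 1)
          rw [Real.rpow_one] at h
          rw [← h]
          norm_num
        rw [hsplit]
        have hle : (1 + v x) ^ (1 / θ - 1) ≤ B ^ (1 / θ - 1) :=
          Real.rpow_le_rpow hx0 (mw_le hd hv x) hexp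
        exact mul_le_mul_of_nonneg_left hle (le_of_lt hp)
    have hsumle : ∑ x : Gp μ d, |1 + v x| ^ (1 / θ)
        ≤ (Fintype.card (Gp μ d) : ℝ) * B ^ (1 / θ - 1) := by
      calc ∑ x : Gp μ d, |1 + v x| ^ (1 / θ)
          ≤ ∑ x : Gp μ d, (1 + v x) * B ^ (1 / θ - 1) :=
            Finset.sum_le_sum fun x _ => hterm x
        _ = (Fintype.card (Gp μ d) : ℝ) * B ^ (1 / θ - 1) := by
            rw [← Finset.sum_mul, hsum1]
    have hsumpos : (0 : ℝ) < (Fintype.card (Gp μ d) : ℝ)⁻¹ * ∑ x : Gp μ d, |1 + v x| ^ (1 / θ) := by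
      have h1 : (1 : ℝ) ≤ ∑ x : Gp μ d, |1 + v x| ^ (1 / θ) := by
        refine le_trans ?_ (Finset.single_le_sum
          (f := fun x : Gp μ d => |1 + v x| ^ (1 / θ))
          (fun x _ => Real.rpow_nonneg (abs_nonneg _) _) (Finset.mem_univ xs))
        refine Real.one_le_rpow ?_ (by positivity)
        rw [abs_of_nonneg (by linarith)]
        exact hxs
      positivity
    have hargle : (Fintype.card (Gp μ d) : ℝ)⁻¹ * ∑ x : Gp μ d, |1 + v x| ^ (1 / θ)
        ≤ B ^ (1 / θ - 1) := by
      rw [inv_mul_le_iff₀ hcard]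
      calc ∑ x : Gp μ d, |1 + v x| ^ (1 / θ)
          ≤ (Fintype.card (Gp μ d) : ℝ) * B ^ (1 / θ - 1) := hsumle
        _ = Fintype.card (Gp μ d) * B ^ (1 / θ - 1) := by ring
    calc θ * Real.log ((Fintype.card (Gp μ d) : ℝ)⁻¹ * ∑ x : Gp μ d, |1 + v x| ^ (1 / θ))
        ≤ θ * Real.log (B ^ (1 / θ - 1)) :=
          mul_le_mul_of_nonneg_left (Real.log_le_log hsumpos hargle) (le_of_lt h0)
      _ = θ * ((1 / θ - 1) * Real.log B) := by rw [Real.log_rpow hBpos]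
      _ = (1 - θ) * Real.log B := by
          have hh : θ * ((1 / θ - 1) * Real.log B) = (θ * (1 / θ) - θ) * Real.log B := by ring
          rw [hh, mul_one_div, div_self hθne]
      _ = ((d : ℝ) - 1) * Real.log μ * (1 - θ) := by rw [hlogB]; ring

/-- The extremal witness: `v = μ^{d-1} - 1` on the line through `0` in direction `j0`,
and `-1` elsewhere. -/
def witV (μ d : ℕ) (j0 : Fin d) : Gp μ d → ℝ :=
  fun x => if ∀ j, j ≠ j0 → x j = 0 then (μ : ℝ) ^ (d - 1) - 1 else -1

lemma witV_sum (hd : 1 ≤ d) (j0 : Fin d) : ∑ x : Gp μ d, witV μ d j0 x = 0 := by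
  have hμd : μ ≤ μ ^ d := by
    have h1 : μ ^ 1 ≤ μ ^ d := Nat.pow_le_pow_right (Nat.pos_of_ne_zero (NeZero.ne μ)) hd
    simpa using h1
  have hd' : d - 1 + 1 = d := by omega
  have hpow : (μ : ℝ) * (μ : ℝ) ^ (d - 1) = (μ : ℝ) ^ d := by
    calc (μ : ℝ) * (μ : ℝ) ^ (d - 1) = (μ : ℝ) ^ (d - 1 + 1) := (pow_succ' _ _).symm
      _ = (μ : ℝ) ^ d := by rw [hd']
  have hcast : ((μ ^ d - μ : ℕ) : ℝ) = (μ : ℝ) ^ d - (μ : ℝ) := by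
    push_cast [Nat.cast_sub hμd]
    ring
  have hneg : (Finset.univ.filter
      (fun x : Gp μ d => ¬ ∀ j, j ≠ j0 → x j = 0)).card = μ ^ d - μ := by
    rw [← Fintype.card_subtype, Fintype.card_subtype_compl, Fintype.card_subtype,
      card_line, card_Gp]
  unfold witV
  rw [Finset.sum_ite, Finset.sum_const, Finset.sum_const, card_line, hneg,
    nsmul_eq_mul, nsmul_eq_mul, hcast]
  clear hneg
  nlinarith [hpow]

lemma witV_mem (hd : 1 ≤ d) (j0 : Fin d) : witV μ d j0 ∈ MW (Wdiv μ d) := by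
  have hμ1 : (1 : ℝ) ≤ (μ : ℝ) := by exact_mod_cast Nat.one_le_iff_ne_zero.mpr (NeZero.ne μ)
  have hB1 : (1 : ℝ) ≤ (μ : ℝ) ^ (d - 1) := one_le_pow₀ hμ1
  refine ⟨witV_sum hd j0, ?_, EuclideanSpace.single j0 (1 : ℂ), ?_, ?_, ?_⟩
  · intro x
    unfold witV
    split
    · linarith
    · exact le_rfl
  · intro h
    have h1 : (EuclideanSpace.single j0 (1 : ℂ)) j0 = 0 := by rw [h]; rfl
    simp [EuclideanSpace.single_apply] at h1
  · rw [← Finset.sum_smul, witV_sum hd j0, zero_smul]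
  · intro x
    have hshift : witV μ d j0 (x + egen μ d j0) = witV μ d j0 x := by
      have hxe : ∀ j, j ≠ j0 → (x + egen μ d j0) j = x j := by
        intro j hj
        have : egen μ d j0 j = 0 := Pi.single_eq_of_ne hj 1
        simp [Pi.add_apply, egen] at this ⊢
        simp [this]
      unfold witV
      by_cases hx : ∀ j, j ≠ j0 → x j = 0
      · rw [if_pos hx, if_pos (fun j hj => by rw [hxe j hj]; exact hx j hj)]
      · rw [if_neg hx, if_neg (fun h => hx (fun j hj => by rw [← hxe j hj]; exact h j hj))]
    rw [Finset.sum_eq_single j0]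
    · simp only [PiLp.smul_apply, EuclideanSpace.single_apply, if_pos rfl, hshift]
      ring
    · intro j _ hj
      simp only [PiLp.smul_apply, EuclideanSpace.single_apply, if_neg hj, smul_zero, sub_self]
    · intro h
      exact absurd (Finset.mem_univ j0) h

lemma witV_kappa (hd : 1 ≤ d) (j0 : Fin d) {θ : ℝ} (hθ : θ ∈ Set.Icc (0 : ℝ) 1) :
    kappaV (Gp μ d) (witV μ d j0) θ = ((d : ℝ) - 1) * Real.log μ * (1 - θ) := by
  have hμ1 : (1 : ℝ) ≤ (μ : ℝ) := by exact_mod_cast Nat.one_le_iff_ne_zero.mpr (NeZero.ne μ)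
  have hμpos : (0 : ℝ) < (μ : ℝ) := by linarith
  set B : ℝ := (μ : ℝ) ^ (d - 1) with hBdef
  have hB1 : (1 : ℝ) ≤ B := one_le_pow₀ hμ1
  have hBpos : (0 : ℝ) < B := by linarith
  have hlogB : Real.log B = ((d : ℝ) - 1) * Real.log μ := by
    rw [hBdef, Real.log_pow, Nat.cast_sub hd, Nat.cast_one]
  have habs : ∀ x : Gp μ d, |1 + witV μ d j0 x| =
      if ∀ j, j ≠ j0 → x j = 0 then B else 0 := by
    intro x
    unfold witV
    split
    · rw [show (1 : ℝ) + (B - 1) = B by ring, abs_of_pos hBpos]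
    · norm_num
  rcases eq_or_lt_of_le hθ.1 with h0 | h0
  · -- θ = 0
    rw [kappaV, if_pos h0.symm, ← h0]
    have hsup : (⨆ x : Gp μ d, |1 + witV μ d j0 x|) = B := by
      apply le_antisymm
      · refine ciSup_le fun x => ?_
        rw [habs x]
        split
        · exact le_rfl
        · linarith
      · have h0mem : ∀ j, j ≠ j0 → (0 : Gp μ d) j = 0 := fun _ _ => rfl
        have hle := le_ciSup (Set.Finite.bddAbove (Set.finite_range
          (fun x : Gp μ d => |1 + witV μ d j0 x|))) (0 : Gp μ d)
        rwa [habs, if_pos h0mem] at hle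
    rw [hsup, hlogB]
    ring
  · -- 0 < θ
    have hθne : θ ≠ 0 := ne_of_gt h0
    rw [kappaV, if_neg hθne]
    have hsum : ∑ x : Gp μ d, |1 + witV μ d j0 x| ^ (1 / θ) = (μ : ℝ) * B ^ (1 / θ) := by
      have : ∀ x : Gp μ d, |1 + witV μ d j0 x| ^ (1 / θ)
          = if ∀ j, j ≠ j0 → x j = 0 then B ^ (1 / θ) else 0 := by
        intro x
        rw [habs x]
        split
        · rfl
        · exact Real.zero_rpow (by positivity)
      rw [Finset.sum_congr rfl fun x _ => this x, Finset.sum_ite, Finset.sum_const,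
        Finset.sum_const, card_line, smul_zero, add_zero, nsmul_eq_mul]
    rw [hsum, card_Gp]
    have hBrpos : (0 : ℝ) < B ^ (1 / θ) := Real.rpow_pos_of_pos hBpos _
    have hc1 : ((μ ^ d : ℕ) : ℝ) = (μ : ℝ) ^ d := by push_cast; ring
    rw [hc1, Real.log_mul (by positivity) (by positivity), Real.log_inv,
      Real.log_mul (by positivity) (ne_of_gt hBrpos), Real.log_rpow hBpos,
      Real.log_pow, hlogB]
    have hdd : (d : ℝ) = ((d : ℝ) - 1) + 1 := by ring
    field_simp
    ring

end Statement11Aux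

/-- for `μ ≥ 4`, the space `W_div` is a geometric space of order `(d-1)/d`:
`κ(θ) = ((d-1)/d)(log m)(1-θ) = (d-1)(log μ)(1-θ)` on `[0,1]`. -/
theorem statement11 (μ d : ℕ) [NeZero μ] (hμ : 4 ≤ μ) (hd : 2 ≤ d) :
    ∀ θ ∈ Set.Icc (0 : ℝ) 1,
      kappa (Wdiv μ d) θ = (((d : ℝ) - 1) / d) * Real.log ((μ : ℝ) ^ d) * (1 - θ) := by
  intro θ hθ
  have hd1 : 1 ≤ d := by omega
  have hdR : (0 : ℝ) < (d : ℝ) := by exact_mod_cast Nat.pos_of_ne_zero (by omega)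
  have hμ1 : (1 : ℝ) ≤ (μ : ℝ) := by exact_mod_cast Nat.one_le_iff_ne_zero.mpr (NeZero.ne μ)
  have hlogμ : 0 ≤ Real.log (μ : ℝ) := Real.log_nonneg hμ1
  have hRHS : (((d : ℝ) - 1) / d) * Real.log ((μ : ℝ) ^ d) * (1 - θ)
      = ((d : ℝ) - 1) * Real.log μ * (1 - θ) := by
    rw [Real.log_pow]
    field_simp
  rw [hRHS]
  set j0 : Fin d := ⟨0, by omega⟩
  apply le_antisymm
  · refine Real.sSup_le ?_ ?_
    · rintro r ⟨v, hv, rfl⟩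
      exact kappaV_le hd1 hv hθ
    · have h1 : (0 : ℝ) ≤ (d : ℝ) - 1 := by
        have : (2 : ℝ) ≤ (d : ℝ) := by exact_mod_cast hd
        linarith
      have h2 : (0 : ℝ) ≤ 1 - θ := by linarith [hθ.2]
      positivity
  · refine le_csSup ⟨((d : ℝ) - 1) * Real.log μ * (1 - θ), ?_⟩ ?_
    · rintro r ⟨v, hv, rfl⟩
      exact kappaV_le hd1 hv hθ
    · exact ⟨witV μ d j0, witV_mem hd1 j0, (witV_kappa hd1 j0 hθ).symm⟩

end TracePaper
end
end
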